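/- The Euclidean plane does not satisfy the Bochi-type displacement inequality: for every integer d ≥ 2 and every constant C > 0, there exists a bounded set Σ of isometries of ℝ² and a point x such that |Σ^d|_x > (d−1)|Σ|_x + D(Σ) + C. -/

import Mathlib

open Filter Topology Function

/-- The set `Sⁿ` of all compositions of `n` elements of `S`. -/
def powSet {X : Type*} (S : Set (X → X)) (n : ℕ) : Set (X → X) :=
  {g | ∃ l : List (X → X), l.length = n ∧ (∀ f ∈ l, f ∈ S) ∧ g = l.foldr (· ∘ ·) id}

/-- The joint displacement `|S|ₓ = sup_{f ∈ S} d(fx, x)`. -/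
noncomputable def dispSup {X : Type*} [MetricSpace X] (x : X) (S : Set (X → X)) : ℝ :=
  sSup ((fun f => dist (f x) x) '' S)

/-- The joint stable length `D(S) = inf_{n ≥ 1} |Sⁿ|ₓ / n`
(which equals `lim_n |Sⁿ|ₓ / n` by Fekete's lemma). -/
noncomputable def jointStable {X : Type*} [MetricSpace X] (S : Set (X → X)) (x : X) : ℝ :=
  ⨅ n : ℕ, dispSup x (powSet S (n + 1)) / (n + 1)

open Complex in
theorem abs_exp_theta (θ : ℝ) :
    ‖Complex.exp (θ * Complex.I) - 1‖ = 2 * |Real.sin (θ/2)| := by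
  have e1 : Complex.exp ((θ/2 : ℝ) * I) * Complex.exp ((θ/2 : ℝ) * I)
      = Complex.exp ((θ:ℝ) * I) := by
    rw [← Complex.exp_add]; congr 1; push_cast; ring
  have e2 : Complex.exp ((θ/2 : ℝ) * I) * Complex.exp (-(((θ/2 : ℝ):ℂ)) * I) = 1 := by
    rw [← Complex.exp_add]; simp
  have h : Complex.exp (θ * I) - 1
      = Complex.exp ((θ/2 : ℝ) * I) * (2 * Complex.sin ((θ/2 : ℝ)) * I) := by
    rw [Complex.sin]
    linear_combination (-1 : ℂ) * e1 + e2 +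
      (Complex.exp ((θ/2 : ℝ) * I)^2
        - Complex.exp ((θ/2 : ℝ) * I) * Complex.exp (-(((θ/2 : ℝ):ℂ)) * I)) * Complex.I_sq
  rw [h, norm_mul, Complex.norm_exp_ofReal_mul_I, one_mul, ← Complex.ofReal_sin]
  simp only [norm_mul, Complex.norm_two, Complex.norm_I, mul_one]
  rw [Complex.norm_real, Real.norm_eq_abs]

lemma foldr_const {X : Type*} (f : X → X) :
    ∀ l : List (X → X), (∀ g ∈ l, g = f) → l.foldr (· ∘ ·) id = f^[l.length]
  | [], _ => by simp
  | a :: l, h => by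
    simp only [List.foldr_cons, List.length_cons]
    rw [foldr_const f l (fun g hg => h g (List.mem_cons_of_mem _ hg)),
      h a List.mem_cons_self, Function.iterate_succ']

lemma powSet_singleton {X : Type*} (f : X → X) (n : ℕ) :
    powSet {f} n = {f^[n]} := by
  ext g
  simp only [powSet, Set.mem_setOf_eq, Set.mem_singleton_iff]
  constructor
  · rintro ⟨l, hlen, hmem, rfl⟩
    rw [foldr_const f l hmem, hlen]
  · rintro rfl
    exact ⟨List.replicate n f, by simp, by simp, by
      rw [foldr_const f _ (by simp), List.length_replicate]⟩

lemma mul_iterate (u : ℂ) (n : ℕ) (x : ℂ) : (fun z => u * z)^[n] x = u ^ n * x := by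
  induction n with
  | zero => simp
  | succ k ih => rw [Function.iterate_succ_apply', ih, pow_succ]; ring

theorem stmt16 :
    ∀ d : ℕ, 2 ≤ d → ∀ C : ℝ, 0 < C →
      ∃ (S : Set (ℂ → ℂ)) (x : ℂ),
        (∀ f ∈ S, Isometry f ∧ Function.Surjective f) ∧
        (∃ M : ℝ, ∀ f ∈ S, dist (f x) x ≤ M) ∧
        ((d : ℝ) - 1) * dispSup x S + jointStable S x + C < dispSup x (powSet S d) := by
  intro d hd C hC
  obtain ⟨D, hDdef⟩ : ∃ D : ℝ, D = (d : ℝ) := ⟨_, rfl⟩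
  have hD2 : (2:ℝ) ≤ D := by rw [hDdef]; exact_mod_cast hd
  have hD0 : (0:ℝ) < D := lt_of_lt_of_le two_pos hD2
  obtain ⟨θ, hθ⟩ : ∃ θ : ℝ, θ = 1 / D^2 := ⟨_, rfl⟩
  have hθ0 : 0 < θ := by rw [hθ]; positivity
  obtain ⟨R, hR⟩ : ∃ R : ℝ, R = 2 * D^2 * C := ⟨_, rfl⟩
  have hR0 : 0 < R := by rw [hR]; positivity
  obtain ⟨u, hu⟩ : ∃ u : ℂ, u = Complex.exp (θ * Complex.I) := ⟨_, rfl⟩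
  obtain ⟨f, hf⟩ : ∃ f : ℂ → ℂ, f = fun z => u * z := ⟨_, rfl⟩
  have hu1 : ‖u‖ = 1 := by rw [hu]; exact Complex.norm_exp_ofReal_mul_I θ
  have hu0 : u ≠ 0 := by rw [hu]; exact Complex.exp_ne_zero _
  have hpi : (3:ℝ) < Real.pi := Real.pi_gt_three
  -- distance formula for iterates
  have hpow : ∀ k : ℕ, u ^ k = Complex.exp (((k : ℝ) * θ : ℝ) * Complex.I) := by
    intro k
    rw [hu, ← Complex.exp_nat_mul]
    congr 1; push_cast; ring
  have hdist : ∀ k : ℕ, dist (f^[k] ((R:ℂ))) ((R:ℂ))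
      = 2 * |Real.sin ((k : ℝ) * θ / 2)| * R := by
    intro k
    rw [hf, mul_iterate u k ((R:ℂ)), Complex.dist_eq,
      show u ^ k * (R:ℂ) - (R:ℂ) = (u ^ k - 1) * (R:ℂ) by ring,
      norm_mul, Complex.norm_real, Real.norm_eq_abs, abs_of_pos hR0, hpow k, abs_exp_theta]
  refine ⟨{f}, (R : ℂ), ?_, ?_, ?_⟩
  · rintro g hg
    rw [Set.mem_singleton_iff] at hg; subst hg
    constructor
    · apply Isometry.of_dist_eq
      intro a b
      simp only [hf, Complex.dist_eq, ← mul_sub, norm_mul, hu1, one_mul]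
    · intro z
      refine ⟨u⁻¹ * z, ?_⟩
      simp only [hf]
      field_simp
  · exact ⟨dist (f ((R:ℂ))) ((R:ℂ)), by
      rintro g hg; rw [Set.mem_singleton_iff] at hg; subst hg; exact le_refl _⟩
  · -- joint stable length is nonpositive
    have hub : ∀ n : ℕ, dispSup ((R:ℂ)) (powSet {f} (n+1)) / ((n:ℝ)+1) ≤ 2*R/((n:ℝ)+1) := by
      intro n
      rw [powSet_singleton, dispSup, Set.image_singleton, csSup_singleton]
      have h1 : dist (f^[n+1] ((R:ℂ))) ((R:ℂ)) ≤ 2 * R := by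
        rw [hdist (n+1)]
        have h2 : |Real.sin (((n+1:ℕ) : ℝ) * θ / 2)| ≤ 1 :=
          abs_le.mpr ⟨Real.neg_one_le_sin _, Real.sin_le_one _⟩
        nlinarith
      gcongr
    have hbdd : BddBelow (Set.range fun n : ℕ =>
        dispSup ((R:ℂ)) (powSet {f} (n+1)) / ((n:ℝ)+1)) := by
      refine ⟨0, ?_⟩
      rintro _ ⟨n, rfl⟩
      have : (0:ℝ) ≤ dispSup ((R:ℂ)) (powSet {f} (n+1)) := by
        rw [powSet_singleton, dispSup, Set.image_singleton, csSup_singleton]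
        exact dist_nonneg
      positivity
    have hj : jointStable {f} ((R:ℂ)) ≤ 0 := by
      apply le_of_forall_pos_le_add
      intro ε hε
      obtain ⟨n, hn⟩ := exists_nat_gt (2*R/ε)
      have hstep : (2:ℝ)*R/((n:ℝ)+1) ≤ ε := by
        have h2 : 2*R < (n:ℝ) * ε := (div_lt_iff₀ hε).mp hn
        rw [div_le_iff₀ (by positivity)]
        nlinarith
      calc jointStable {f} ((R:ℂ)) ≤ _ := ciInf_le hbdd n
        _ ≤ 2*R/((n:ℝ)+1) := hub n
        _ ≤ 0 + ε := by rw [zero_add]; exact hstep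
    -- displacement values
    have hsing : dispSup ((R:ℂ)) {f} = dist (f ((R:ℂ))) ((R:ℂ)) := by
      rw [dispSup, Set.image_singleton, csSup_singleton]
    have hpowd : dispSup ((R:ℂ)) (powSet {f} d) = dist (f^[d] ((R:ℂ))) ((R:ℂ)) := by
      rw [powSet_singleton, dispSup, Set.image_singleton, csSup_singleton]
    have hθle : θ ≤ 1 := by
      rw [hθ, div_le_one (by positivity)]; nlinarith
    have hs1nn : 0 ≤ Real.sin (θ/2) :=
      Real.sin_nonneg_of_nonneg_of_le_pi (by positivity) (by nlinarith)
    have hDθ : (d:ℝ) * θ / 2 = 1 / (2*D) := by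
      rw [hθ, hDdef]; field_simp
    have hsdnn : 0 ≤ Real.sin (1/(2*D)) := by
      apply Real.sin_nonneg_of_nonneg_of_le_pi (by positivity)
      have : 1/(2*D) ≤ 1 := by rw [div_le_one (by positivity)]; nlinarith
      nlinarith
    have hd1 : dist (f ((R:ℂ))) ((R:ℂ)) = 2 * Real.sin (θ/2) * R := by
      have h := hdist 1
      rw [Function.iterate_one] at h
      rw [h]
      norm_num [abs_of_nonneg hs1nn]
    have hdd : dist (f^[d] ((R:ℂ))) ((R:ℂ)) = 2 * Real.sin (1/(2*D)) * R := by
      rw [hdist d, hDθ, abs_of_nonneg hsdnn]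
    rw [hsing, hpowd, hd1, hdd]
    -- numeric estimates
    have h1 : Real.sin (θ/2) < 1/(2*D^2) := by
      have := Real.sin_lt (show 0 < θ/2 by positivity)
      calc Real.sin (θ/2) < θ/2 := this
        _ = 1/(2*D^2) := by rw [hθ]; ring
    have h2 : 1/(2*D) - (1/(2*D))^3/4 < Real.sin (1/(2*D)) := by
      have := Real.sin_gt_sub_cube (show 0 < 1/(2*D) by positivity)
      have : 0 < (1/(2*D))^3 := by positivity
      linarith
    have key1 : (D-1) * (2 * Real.sin (θ/2) * R) < 2*C*(D-1) := by
      have hc : (0:ℝ) < (D-1) * (2*R) := by nlinarith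
      calc (D-1) * (2 * Real.sin (θ/2) * R) = (D-1) * (2*R) * Real.sin (θ/2) := by ring
        _ < (D-1) * (2*R) * (1/(2*D^2)) := by exact (mul_lt_mul_iff_right₀ hc).mpr h1
        _ = 2*C*(D-1) := by rw [hR]; field_simp
    have key2 : 2*D*C - C/(8*D) < 2 * Real.sin (1/(2*D)) * R := by
      have hc : (0:ℝ) < 2*R := by positivity
      calc 2*D*C - C/(8*D) = 2*R * (1/(2*D) - (1/(2*D))^3/4) := by
            rw [hR]; field_simp; ring
        _ < 2*R * Real.sin (1/(2*D)) := by exact (mul_lt_mul_iff_right₀ hc).mpr h2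
        _ = 2 * Real.sin (1/(2*D)) * R := by ring
    have hsmall : C/(8*D) < C := div_lt_self hC (by linarith)
    rw [← hDdef]
    linarith
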